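/- Fix M ≥ 2, n ∈ {1,…,M} and η_Y > 0. Define the discrete dynamics w(0) = 0 ∈ ℝ^M and w(s) = w(s−1) + η_Y (e_n − α(s)) for s ≥ 1, where α(s) := exp(w(s−1))/(1ᵀexp(w(s−1))) is the softmax of w(s−1). Define h*(0) = 0 and h*(s) = h*(s−1) + η_Y/((M−1) + exp(M·h*(s−1))) for s ≥ 1. Then for every s ≥ 1: (i) w(s) = (M−1)·h*(s)·ζ_n; (ii) α_j(s) = exp(M·h*(s−1))/((M−1)+exp(M·h*(s−1))) if j = n and α_j(s) = 1/((M−1)+exp(M·h*(s−1))) if j ≠ n; (iii) e_n − α(s) = ((M−1)/((M−1)+exp(M·h*(s−1))))·ζ_n. -/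

import Mathlib

open Real Finset

/-- The discrete decoder dynamics `w(0) = 0`,
`w(s) = w(s−1) + η_Y (e_n − α(s))` with `α(s) = softmax (w (s−1))` admits the closed form
`w(s) = (M−1)·h*(s)·ζ_n`, where `h*` is the recursion
`h*(s) = h*(s−1) + η_Y/((M−1) + exp (M·h*(s−1)))`, `h*(0) = 0`, together with the explicit
expressions for `α(s)` and `e_n − α(s)`. -/
theorem stmt_4 (M : ℕ) (hM : 2 ≤ M) (n : Fin M) (ηY : ℝ) (hη : 0 < ηY)
    (w : ℕ → Fin M → ℝ) (α : ℕ → Fin M → ℝ) (hstar : ℕ → ℝ)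
    -- `α(s)` is the softmax of `w(s−1)`
    (hα : ∀ s : ℕ, 1 ≤ s → ∀ j : Fin M,
      α s j = Real.exp (w (s - 1) j) / ∑ k : Fin M, Real.exp (w (s - 1) k))
    -- dynamics of `w`
    (hw0 : ∀ j : Fin M, w 0 j = 0)
    (hwrec : ∀ s : ℕ, 1 ≤ s → ∀ j : Fin M,
      w s j = w (s - 1) j + ηY * ((if j = n then (1 : ℝ) else 0) - α s j))
    -- recursion defining `h*`
    (hh0 : hstar 0 = 0)
    (hhrec : ∀ s : ℕ, 1 ≤ s →
      hstar s = hstar (s - 1) + ηY / (((M : ℝ) - 1) + Real.exp (M * hstar (s - 1)))) :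
    ∀ s : ℕ, 1 ≤ s →
      -- (i)  w(s) = (M−1)·h*(s)·ζ_n
      (∀ j : Fin M, w s j =
        ((M : ℝ) - 1) * hstar s *
          ((M : ℝ) / ((M : ℝ) - 1) * ((if j = n then (1 : ℝ) else 0) - 1 / (M : ℝ)))) ∧
      -- (ii) explicit form of α(s)
      (∀ j : Fin M, α s j =
        if j = n then
          Real.exp (M * hstar (s - 1)) / (((M : ℝ) - 1) + Real.exp (M * hstar (s - 1)))
        else 1 / (((M : ℝ) - 1) + Real.exp (M * hstar (s - 1)))) ∧
      -- (iii) e_n − α(s) = ((M−1)/((M−1)+exp(M·h*(s−1))))·ζ_n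
      (∀ j : Fin M, (if j = n then (1 : ℝ) else 0) - α s j =
        (((M : ℝ) - 1) / (((M : ℝ) - 1) + Real.exp (M * hstar (s - 1)))) *
          ((M : ℝ) / ((M : ℝ) - 1) * ((if j = n then (1 : ℝ) else 0) - 1 / (M : ℝ)))) := by
  classical
  have hM1 : (1 : ℝ) < (M : ℝ) := by
    have : (2 : ℝ) ≤ (M : ℝ) := by exact_mod_cast hM
    linarith
  have hM0 : (M : ℝ) ≠ 0 := by linarith
  have hM1pos : (0 : ℝ) < (M : ℝ) - 1 := by linarith
  have hM1ne : (M : ℝ) - 1 ≠ 0 := ne_of_gt hM1pos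
  have hDpos : ∀ x : ℝ, 0 < ((M : ℝ) - 1) + Real.exp x :=
    fun x => add_pos hM1pos (Real.exp_pos x)
  -- explicit softmax form given the previous-step closed form
  have alpha_form : ∀ s : ℕ, 1 ≤ s →
      (∀ j : Fin M, w (s - 1) j =
        if j = n then ((M : ℝ) - 1) * hstar (s - 1) else -(hstar (s - 1))) →
      ∀ j : Fin M, α s j =
        if j = n then
          Real.exp (M * hstar (s - 1)) / (((M : ℝ) - 1) + Real.exp (M * hstar (s - 1)))
        else 1 / (((M : ℝ) - 1) + Real.exp (M * hstar (s - 1))) := by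
    intro s hs hwprev j
    set h := hstar (s - 1) with hh
    have hsum : ∑ k : Fin M, Real.exp (w (s - 1) k) =
        (Real.exp ((M : ℝ) * h) + ((M : ℝ) - 1)) * Real.exp (-h) := by
      have h1 : ∀ k : Fin M, Real.exp (w (s - 1) k) =
          if k = n then Real.exp (((M : ℝ) - 1) * h) else Real.exp (-h) := by
        intro k; rw [hwprev k]; split <;> rfl
      rw [Finset.sum_congr rfl (fun k _ => h1 k), Finset.sum_ite, Finset.sum_const,
        Finset.sum_const]
      have hc1 : (Finset.univ.filter (fun k : Fin M => k = n)).card = 1 := by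
        simp [Finset.filter_eq']
      have hc2 : (Finset.univ.filter (fun k : Fin M => ¬ k = n)).card = M - 1 := by
        simp [Finset.filter_ne']
      rw [hc1, hc2, one_smul, nsmul_eq_mul]
      have hcast : ((M - 1 : ℕ) : ℝ) = (M : ℝ) - 1 := by
        have : 1 ≤ M := by omega
        push_cast [Nat.cast_sub this]; ring
      rw [hcast, show ((M : ℝ) - 1) * h = (M : ℝ) * h + (-h) by ring, Real.exp_add]
      ring
    rw [hα s hs j, hwprev j, hsum]
    have hd1 : (Real.exp ((M : ℝ) * h) + ((M : ℝ) - 1)) * Real.exp (-h) ≠ 0 :=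
      ne_of_gt (mul_pos (add_pos (Real.exp_pos _) hM1pos) (Real.exp_pos _))
    have hd2 : ((M : ℝ) - 1) + Real.exp ((M : ℝ) * h) ≠ 0 := ne_of_gt (hDpos _)
    by_cases hj : j = n
    · simp only [if_pos hj]
      rw [div_eq_div_iff hd1 hd2,
        show ((M : ℝ) - 1) * h = (M : ℝ) * h + (-h) by ring, Real.exp_add]
      ring
    · simp only [if_neg hj]
      rw [div_eq_div_iff hd1 hd2]
      ring
  -- closed form for w, in "if" form, for all s
  have key : ∀ s : ℕ, ∀ j : Fin M,
      w s j = if j = n then ((M : ℝ) - 1) * hstar s else -(hstar s) := by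
    intro s
    induction s with
    | zero => intro j; rw [hw0 j, hh0]; split <;> ring
    | succ t ih =>
      have ht1 : 1 ≤ t + 1 := by omega
      have hprev : ∀ j : Fin M, w (t + 1 - 1) j =
          if j = n then ((M : ℝ) - 1) * hstar (t + 1 - 1) else -(hstar (t + 1 - 1)) := by
        simpa using ih
      have hαv := alpha_form (t + 1) ht1 hprev
      intro j
      rw [hwrec (t + 1) ht1 j, hhrec (t + 1) ht1]
      simp only [Nat.add_sub_cancel] at hαv ⊢
      rw [ih j, hαv j]
      have hd : ((M : ℝ) - 1) + Real.exp ((M : ℝ) * hstar t) ≠ 0 := ne_of_gt (hDpos _)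
      by_cases hj : j = n
      · simp only [if_pos hj]; field_simp; ring
      · simp only [if_neg hj]; field_simp; ring
  -- assemble
  intro s hs
  have hprev : ∀ j : Fin M, w (s - 1) j =
      if j = n then ((M : ℝ) - 1) * hstar (s - 1) else -(hstar (s - 1)) := key (s - 1)
  have hαv := alpha_form s hs hprev
  have hd : ((M : ℝ) - 1) + Real.exp ((M : ℝ) * hstar (s - 1)) ≠ 0 := ne_of_gt (hDpos _)
  refine ⟨fun j => ?_, hαv, fun j => ?_⟩
  · rw [key s j]
    by_cases hj : j = n
    · simp only [if_pos hj]; field_simp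
    · simp only [if_neg hj]; field_simp; ring
  · rw [hαv j]
    by_cases hj : j = n
    · simp only [if_pos hj]; field_simp; ring
    · simp only [if_neg hj]; field_simp; ring
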